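/- arXiv:2512.08432 — 3 statements merged into one kernel-verified Lean document; each statement's English description precedes it below -/
import Mathlib

section
/- Let H be an N×N complex Hermitian matrix with H² = H, let |ψ0⟩ ∈ ℂ^N be a unit vector, ψ0 = |ψ0⟩⟨ψ0|, X0 := [H, ψ0], Y0 := i[H, X0]. Fix x, y ∈ ℝ, and let A, R ∈ ℝ satisfy R ≥ 0, x = R cos A, y = R sin A. Set a1 := A + π/2, a2 := A − π/2, b1 := −R/2, b2 := R/2. Then for every unitary U, the curve γ(t) := e^{i a1 H} e^{i t b1 ψ0} e^{−iπH} e^{i t b2 ψ0} e^{−i a2 H} U (t ≥ 0) satisfies γ(0) = U, and γ is differentiable at t = 0 with γ′(0) = (x X0 + y Y0) U. (This is the 5-factor Grover-compatible retraction.) -/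
open Matrix

attribute [local instance] Matrix.frobeniusNormedAddCommGroup Matrix.frobeniusNormedSpace
attribute [local instance] Matrix.frobeniusNormedRing Matrix.frobeniusNormedAlgebra

/-- The rank-one projector `|ψ⟩⟨ψ|` associated with a vector `ψ`. -/
noncomputable def rankOneProj {N : ℕ} (ψ : Fin N → ℂ) : Matrix (Fin N) (Fin N) ℂ :=
  Matrix.vecMulVec ψ (star ψ)

/-- The gate `e^{iθM}` for a matrix `M` and a real angle `θ`. -/
noncomputable def expGate {N : ℕ} (M : Matrix (Fin N) (Fin N) ℂ) (θ : ℝ) :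
    Matrix (Fin N) (Fin N) ℂ :=
  NormedSpace.exp ((Complex.I * (θ : ℂ)) • M)

theorem exp_idem {N : ℕ} (M : Matrix (Fin N) (Fin N) ℂ) (h : M * M = M) (c : ℂ) :
    NormedSpace.exp (c • M) = 1 + (Complex.exp c - 1) • M := by
  have hMn : ∀ n : ℕ, M ^ (n + 1) = M := by
    intro n
    induction n with
    | zero => simp
    | succ k ih => rw [pow_succ, ih, h]
  have key : ∀ n : ℕ, ((n.factorial : ℂ)⁻¹) • (c • M) ^ n
      = ((n.factorial : ℂ)⁻¹ * c ^ n) • M + (if n = 0 then (1 : Matrix (Fin N) (Fin N) ℂ) - M else 0) := by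
    intro n
    cases n with
    | zero => simp
    | succ k =>
      rw [smul_pow, hMn, smul_smul]
      simp
  have hs : Summable (fun n : ℕ => ((n.factorial : ℂ)⁻¹ * c ^ n)) := by
    simpa [smul_eq_mul] using NormedSpace.expSeries_summable' (𝕂 := ℂ) c
  have hs1 : Summable (fun n : ℕ => ((n.factorial : ℂ)⁻¹ * c ^ n) • M) := hs.smul_const M
  have hs2 : Summable (fun n : ℕ => (if n = 0 then (1 : Matrix (Fin N) (Fin N) ℂ) - M else 0)) :=
    summable_of_ne_finset_zero (s := {0}) (by intro n hn; simp at hn; simp [hn])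
  rw [NormedSpace.exp_eq_tsum (𝕂 := ℂ)]
  simp only [key]
  rw [Summable.tsum_add hs1 hs2, Summable.tsum_smul_const hs, tsum_ite_eq]
  have : (∑' n : ℕ, ((n.factorial : ℂ)⁻¹ * c ^ n)) = Complex.exp c := by
    rw [Complex.exp_eq_exp_ℂ, NormedSpace.exp_eq_tsum (𝕂 := ℂ)]
    simp [smul_eq_mul]
  rw [this, sub_smul, one_smul]
  abel

theorem expGate_idem {N : ℕ} (M : Matrix (Fin N) (Fin N) ℂ) (h : M * M = M) (θ : ℝ) :
    expGate M θ = 1 + (Complex.exp (Complex.I * θ) - 1) • M :=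
  exp_idem M h _

theorem proj_sq {N : ℕ} (ψ : Fin N → ℂ) (hψ : star ψ ⬝ᵥ ψ = 1) :
    rankOneProj ψ * rankOneProj ψ = rankOneProj ψ := by
  ext i j
  simp only [rankOneProj, Matrix.mul_apply, Matrix.vecMulVec_apply, Pi.star_apply]
  have : ∑ k, (ψ i * star (ψ k)) * (ψ k * star (ψ j))
      = (ψ i * star (ψ j)) * ∑ k, star (ψ k) * ψ k := by
    rw [Finset.mul_sum]
    exact Finset.sum_congr rfl (fun k _ => by ring)
  rw [this]
  have h1 : ∑ k, star (ψ k) * ψ k = 1 := by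
    simpa [dotProduct, Pi.star_apply] using hψ
  rw [h1, mul_one]

theorem gateDeriv {N : ℕ} (P : Matrix (Fin N) (Fin N) ℂ) (hPP : P * P = P) (b : ℝ) :
    HasDerivAt (fun t : ℝ => expGate P (t * b)) ((Complex.I * b) • P) 0 := by
  have hfun : (fun t : ℝ => expGate P (t * b))
      = fun t : ℝ => 1 + (Complex.exp (Complex.I * b * t) - 1) • P := by
    funext t
    rw [expGate_idem P hPP]
    congr 2
    push_cast
    ring
  rw [hfun]
  have h1 : HasDerivAt (fun z : ℂ => Complex.exp (Complex.I * b * z)) (Complex.I * b) (((0:ℝ):ℂ)) := by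
    have := ((hasDerivAt_id (((0:ℝ):ℂ))).const_mul (Complex.I * (b:ℂ))).cexp
    simpa using this
  have h2 := h1.comp_ofReal
  exact ((h2.sub_const 1).smul_const P).const_add 1

theorem gate_mul {N : ℕ} (M : Matrix (Fin N) (Fin N) ℂ) (h : M * M = M) (θ₁ θ₂ : ℝ) :
    expGate M θ₁ * expGate M θ₂ = expGate M (θ₁ + θ₂) := by
  rw [expGate_idem M h, expGate_idem M h, expGate_idem M h]
  have he : Complex.exp (Complex.I * ↑(θ₁ + θ₂))
      = Complex.exp (Complex.I * θ₁) * Complex.exp (Complex.I * θ₂) := by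
    rw [← Complex.exp_add]
    congr 1
    push_cast
    ring
  rw [he]
  simp only [mul_add, add_mul, one_mul, mul_one, smul_mul_assoc, mul_smul_comm, smul_smul, h]
  match_scalars <;> ring

theorem gate_zero {N : ℕ} (M : Matrix (Fin N) (Fin N) ℂ) : expGate M 0 = 1 := by
  simp [expGate, NormedSpace.exp_zero]


theorem stmt_8 {N : ℕ} (H : Matrix (Fin N) (Fin N) ℂ)
    (hHerm : H.IsHermitian) (hProj : H * H = H)
    (ψ₀ : Fin N → ℂ) (hψ₀ : star ψ₀ ⬝ᵥ ψ₀ = 1)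
    (X₀ Y₀ : Matrix (Fin N) (Fin N) ℂ)
    (hX₀ : X₀ = H * rankOneProj ψ₀ - rankOneProj ψ₀ * H)
    (hY₀ : Y₀ = Complex.I • (H * X₀ - X₀ * H))
    (x y A R : ℝ) (hR : 0 ≤ R)
    (hx : x = R * Real.cos A) (hy : y = R * Real.sin A)
    (a₁ a₂ b₁ b₂ : ℝ)
    (ha₁ : a₁ = A + Real.pi / 2) (ha₂ : a₂ = A - Real.pi / 2)
    (hb₁ : b₁ = -R / 2) (hb₂ : b₂ = R / 2)
    (U : Matrix (Fin N) (Fin N) ℂ) (hU : U ∈ Matrix.unitaryGroup (Fin N) ℂ)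
    (γ : ℝ → Matrix (Fin N) (Fin N) ℂ)
    (hγ : γ = fun t =>
      expGate H a₁ * expGate (rankOneProj ψ₀) (t * b₁) * expGate H (-Real.pi) *
        expGate (rankOneProj ψ₀) (t * b₂) * expGate H (-a₂) * U) :
    γ 0 = U ∧
    HasDerivWithinAt γ (((x : ℂ) • X₀ + (y : ℂ) • Y₀) * U) (Set.Ici (0 : ℝ)) 0 := by
  set P := rankOneProj ψ₀ with hP
  have hPP : P * P = P := proj_sq ψ₀ hψ₀
  -- scalar values of the exponentials
  have e1 : Complex.exp (Complex.I * ↑a₁) = -(Real.sin A : ℂ) + (Real.cos A : ℂ) * Complex.I := by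
    rw [ha₁, mul_comm, Complex.exp_mul_I, ← Complex.ofReal_cos, ← Complex.ofReal_sin,
      Real.cos_add, Real.sin_add, Real.cos_pi_div_two, Real.sin_pi_div_two]
    push_cast
    ring
  have e2 : Complex.exp (Complex.I * ↑(-Real.pi)) = -1 := by
    rw [show Complex.I * ((-Real.pi : ℝ) : ℂ) = -(↑Real.pi * Complex.I) by push_cast; ring,
      Complex.exp_neg, Complex.exp_pi_mul_I]
    norm_num
  have e3 : Complex.exp (Complex.I * ↑(-a₂)) = (Real.sin A : ℂ) + (Real.cos A : ℂ) * Complex.I := by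
    rw [ha₂, show -(A - Real.pi / 2) = Real.pi / 2 - A from by ring, mul_comm,
      Complex.exp_mul_I, ← Complex.ofReal_cos, ← Complex.ofReal_sin,
      Real.cos_pi_div_two_sub, Real.sin_pi_div_two_sub]
  constructor
  · rw [hγ]
    simp only [zero_mul, gate_zero, mul_one]
    rw [gate_mul H hProj, gate_mul H hProj]
    rw [show a₁ + -Real.pi + -a₂ = 0 by rw [ha₁, ha₂]; ring, gate_zero, one_mul]
  · have hd : HasDerivAt γ
        (((((expGate H a₁ * ((Complex.I * b₁) • P)) * expGate H (-Real.pi)) * expGate P (0*b₂)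
          + ((expGate H a₁ * expGate P (0*b₁)) * expGate H (-Real.pi)) * ((Complex.I * b₂) • P))
            * expGate H (-a₂)) * U) 0 := by
      rw [hγ]
      exact (((((gateDeriv P hPP b₁).const_mul (expGate H a₁)).mul_const
        (expGate H (-Real.pi))).mul (gateDeriv P hPP b₂)).mul_const (expGate H (-a₂))).mul_const U
    have key : (((((expGate H a₁ * ((Complex.I * b₁) • P)) * expGate H (-Real.pi)) * expGate P (0*b₂)
          + ((expGate H a₁ * expGate P (0*b₁)) * expGate H (-Real.pi)) * ((Complex.I * b₂) • P))
            * expGate H (-a₂)) * U)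
        = ((x : ℂ) • X₀ + (y : ℂ) • Y₀) * U := by
      have hH2 : ∀ B : Matrix (Fin N) (Fin N) ℂ, H * (H * B) = H * B := by
        intro B; rw [← mul_assoc, hProj]
      rw [hY₀, hX₀, hx, hy, hb₁, hb₂]
      simp only [zero_mul, gate_zero, mul_one, one_mul,
        expGate_idem H hProj, e1, e2, e3]
      simp only [mul_add, add_mul, sub_mul, mul_sub, smul_mul_assoc, mul_smul_comm, smul_smul,
        smul_sub, smul_add, mul_one, one_mul, mul_assoc, hH2, hProj, ← hP]
      match_scalars <;> (push_cast; ring_nf; try simp only [Complex.I_sq]; try push_cast; try ring_nf; try ring)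
    rw [key] at hd
    exact hd.hasDerivWithinAt
end

section
/- Let H be an N×N complex Hermitian matrix with H² = H, let |ψ0⟩ ∈ ℂ^N be a unit vector with q0 := ⟨ψ0|H|ψ0⟩ ∈ (0,1), ψ0 = |ψ0⟩⟨ψ0|, X0 := [H, ψ0], Y0 := i[H, X0], and c0 := √(2 q0 (1 − q0)), so that ‖X0‖_F = ‖Y0‖_F = c0 and ⟨X0, Y0⟩ = 0. For U unitary and x, y ∈ ℝ, let η := (x X0 + y Y0) U and let R_U(η) := e^{i a1 H} e^{i b1 ψ0} e^{−iπH} e^{i b2 ψ0} e^{−i a2 H} U denote the 5-factor retraction, where R := √(x² + y²), A := atan2(y, x), a1 := A + π/2, a2 := A − π/2, b1 := −R/2, b2 := R/2. Then ‖R_U(η) − U‖_F ≤ ‖η‖_F, where ‖η‖_F = c0 R. -/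
set_option maxHeartbeats 4000000


open Matrix

/-- The Frobenius norm `‖A‖_F = √(Tr(A†A))`. -/
noncomputable def frobNorm {N : ℕ} (A : Matrix (Fin N) (Fin N) ℂ) : ℝ :=
  Real.sqrt (Matrix.trace (Aᴴ * A)).re

/-- The 5-factor Grover-compatible retraction
`R_U(η) = e^{i a₁ H} e^{i b₁ ψ₀} e^{−iπH} e^{i b₂ ψ₀} e^{−i a₂ H} U`
for the tangent direction with coordinates `(x, y)`, where `(A, R)` are the polar
coordinates of `(x, y)` (`A = atan2(y, x)`, `R = √(x² + y²)`), `a₁ = A + π/2`,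
`a₂ = A − π/2`, `b₁ = −R/2`, `b₂ = R/2`. -/
noncomputable def retr5 {N : ℕ} (H P : Matrix (Fin N) (Fin N) ℂ) (x y : ℝ)
    (U : Matrix (Fin N) (Fin N) ℂ) : Matrix (Fin N) (Fin N) ℂ :=
  let R : ℝ := Real.sqrt (x ^ 2 + y ^ 2)
  let A : ℝ := Complex.arg ((x : ℂ) + (y : ℂ) * Complex.I)
  expGate H (A + Real.pi / 2) * expGate P (-R / 2) * expGate H (-Real.pi) *
    expGate P (R / 2) * expGate H (-(A - Real.pi / 2)) * U

lemma exp_proj {N : ℕ} (Q : Matrix (Fin N) (Fin N) ℂ) (hQ : Q * Q = Q) (c : ℂ) :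
    NormedSpace.exp (c • Q) = 1 + (Complex.exp c - 1) • Q := by
  letI : SeminormedRing (Matrix (Fin N) (Fin N) ℂ) := Matrix.linftyOpSemiNormedRing
  letI : NormedRing (Matrix (Fin N) (Fin N) ℂ) := Matrix.linftyOpNormedRing
  letI : NormedAlgebra ℂ (Matrix (Fin N) (Fin N) ℂ) := Matrix.linftyOpNormedAlgebra
  have hQn : ∀ n : ℕ, Q ^ (n + 1) = Q := by
    intro n; induction n with
    | zero => simp
    | succ k ih => rw [pow_succ, ih, hQ]
  have hsum : Summable (fun n : ℕ => ((n.factorial : ℂ))⁻¹ • (c • Q) ^ n) :=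
    NormedSpace.expSeries_summable' (c • Q)
  have hsumc : Summable (fun n : ℕ => ((n.factorial : ℂ))⁻¹ • c ^ n) :=
    NormedSpace.expSeries_summable' c
  have hg : Summable (fun n : ℕ => (((n + 1).factorial : ℂ))⁻¹ • c ^ (n + 1)) :=
    (summable_nat_add_iff 1).2 hsumc
  have hexpc : Complex.exp c = 1 + ∑' n : ℕ, (((n + 1).factorial : ℂ))⁻¹ • c ^ (n + 1) := by
    rw [Complex.exp_eq_exp_ℂ, NormedSpace.exp_eq_tsum (𝕂 := ℂ)]
    beta_reduce
    rw [Summable.tsum_eq_zero_add hsumc]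
    simp
  rw [NormedSpace.exp_eq_tsum (𝕂 := ℂ)]
  beta_reduce
  rw [Summable.tsum_eq_zero_add hsum]
  have hterm : ∀ n : ℕ, (((n + 1).factorial : ℂ))⁻¹ • (c • Q) ^ (n + 1)
      = ((((n + 1).factorial : ℂ))⁻¹ • c ^ (n + 1)) • Q := by
    intro n
    rw [smul_pow, hQn, smul_smul]
    rw [smul_eq_mul]
  simp only [hterm]
  rw [Summable.tsum_smul_const hg]
  have h2 : (∑' n : ℕ, (((n + 1).factorial : ℂ))⁻¹ • c ^ (n + 1)) = Complex.exp c - 1 := by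
    rw [hexpc]; ring
  rw [h2]
  norm_num

lemma trace_proj_mul {N : ℕ} (ψ : Fin N → ℂ) (M : Matrix (Fin N) (Fin N) ℂ) :
    Matrix.trace (rankOneProj ψ * M) = star ψ ⬝ᵥ (M *ᵥ ψ) := by
  simp only [Matrix.trace, Matrix.diag, Matrix.mul_apply, rankOneProj,
    Matrix.vecMulVec_apply, dotProduct, Matrix.mulVec, Pi.star_apply]
  rw [Finset.sum_comm]
  congr 1; ext j
  rw [Finset.mul_sum]
  congr 1; ext i
  ring

lemma proj_mul_proj {N : ℕ} (ψ : Fin N → ℂ) (M : Matrix (Fin N) (Fin N) ℂ) :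
    rankOneProj ψ * M * rankOneProj ψ = (star ψ ⬝ᵥ (M *ᵥ ψ)) • rankOneProj ψ := by
  ext i k
  simp only [Matrix.mul_apply, rankOneProj, Matrix.vecMulVec_apply, dotProduct,
    Matrix.mulVec, Matrix.smul_apply, Pi.star_apply, smul_eq_mul]
  simp only [Finset.sum_mul, Finset.mul_sum]
  rw [Finset.sum_comm]
  congr 1; ext l
  congr 1; ext j
  ring

lemma proj_herm {N : ℕ} (ψ : Fin N → ℂ) : (rankOneProj ψ)ᴴ = rankOneProj ψ := by
  ext i j
  simp [rankOneProj, Matrix.conjTranspose_apply, Matrix.vecMulVec_apply, mul_comm]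

lemma expGate_eq {N : ℕ} (Q : Matrix (Fin N) (Fin N) ℂ) (hQ : Q * Q = Q) (θ : ℝ) :
    expGate Q θ = 1 + (Complex.exp (Complex.I * θ) - 1) • Q := exp_proj Q hQ _

lemma one_add_smul_mul {N : ℕ} (Q : Matrix (Fin N) (Fin N) ℂ) (hQ : Q * Q = Q) (s t : ℂ) :
    (1 + s • Q) * (1 + t • Q) = 1 + (s + t + s * t) • Q := by
  rw [mul_add, add_mul, add_mul, mul_one, one_mul]
  rw [Matrix.smul_mul, Matrix.mul_smul, Matrix.smul_mul, smul_smul, hQ, mul_one,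
    add_smul, add_smul, mul_comm t s]
  abel

lemma expGate_mul {N : ℕ} (Q : Matrix (Fin N) (Fin N) ℂ) (hQ : Q * Q = Q) (θ₁ θ₂ : ℝ) :
    expGate Q θ₁ * expGate Q θ₂ = expGate Q (θ₁ + θ₂) := by
  rw [expGate_eq Q hQ, expGate_eq Q hQ, expGate_eq Q hQ, one_add_smul_mul Q hQ]
  congr 1
  push_cast
  rw [mul_add, Complex.exp_add]
  ring

lemma expGate_zero {N : ℕ} (Q : Matrix (Fin N) (Fin N) ℂ) (hQ : Q * Q = Q) :
    expGate Q 0 = 1 := by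
  rw [expGate_eq Q hQ]
  simp

lemma expGate_star {N : ℕ} (Q : Matrix (Fin N) (Fin N) ℂ) (hQ : Q * Q = Q)
    (hQH : Qᴴ = Q) (θ : ℝ) : (expGate Q θ)ᴴ = expGate Q (-θ) := by
  rw [expGate_eq Q hQ, expGate_eq Q hQ]
  rw [conjTranspose_add, conjTranspose_one, conjTranspose_smul, hQH]
  congr 2
  rw [Complex.star_def, map_sub, _root_.map_one, ← Complex.exp_conj, _root_.map_mul,
    Complex.conj_I, Complex.conj_ofReal]
  push_cast
  ring_nf

lemma expGate_cancel {N : ℕ} (Q : Matrix (Fin N) (Fin N) ℂ) (hQ : Q * Q = Q) (θ : ℝ)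
    (M : Matrix (Fin N) (Fin N) ℂ) :
    expGate Q (-θ) * (expGate Q θ * M) = M := by
  rw [← mul_assoc, expGate_mul Q hQ, neg_add_cancel, expGate_zero Q hQ, one_mul]

theorem stmt_12 {N : ℕ} (H : Matrix (Fin N) (Fin N) ℂ)
    (hHerm : H.IsHermitian) (hProj : H * H = H)
    (ψ₀ : Fin N → ℂ) (hψ₀ : star ψ₀ ⬝ᵥ ψ₀ = 1)
    (q₀ : ℝ) (hq₀ : star ψ₀ ⬝ᵥ (H *ᵥ ψ₀) = (q₀ : ℂ))
    (hq₀pos : 0 < q₀) (hq₀lt : q₀ < 1)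
    (X₀ Y₀ : Matrix (Fin N) (Fin N) ℂ)
    (hX₀ : X₀ = H * rankOneProj ψ₀ - rankOneProj ψ₀ * H)
    (hY₀ : Y₀ = Complex.I • (H * X₀ - X₀ * H))
    (c₀ : ℝ) (hc₀ : c₀ = Real.sqrt (2 * q₀ * (1 - q₀)))
    (U : Matrix (Fin N) (Fin N) ℂ) (hU : U ∈ Matrix.unitaryGroup (Fin N) ℂ)
    (x y : ℝ) (η : Matrix (Fin N) (Fin N) ℂ)
    (hη : η = ((x : ℂ) • X₀ + (y : ℂ) • Y₀) * U) :
    frobNorm (retr5 H (rankOneProj ψ₀) x y U - U) ≤ frobNorm η ∧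
    frobNorm η = c₀ * Real.sqrt (x ^ 2 + y ^ 2) := by
  set P := rankOneProj ψ₀ with hPdef
  have hPh : Pᴴ = P := proj_herm ψ₀
  have hPP : P * P = P := by
    have h := proj_mul_proj ψ₀ 1
    rw [mul_one, Matrix.one_mulVec, hψ₀, one_smul] at h
    exact h
  have hPHP : P * H * P = (q₀ : ℂ) • P := by rw [proj_mul_proj ψ₀ H, hq₀]
  have trP : Matrix.trace P = 1 := by
    have h := trace_proj_mul ψ₀ 1
    rw [mul_one, Matrix.one_mulVec, hψ₀] at h
    exact h
  have trPH : Matrix.trace (P * H) = (q₀ : ℂ) := by rw [trace_proj_mul ψ₀ H, hq₀]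
  have trHP : Matrix.trace (H * P) = (q₀ : ℂ) := by rw [Matrix.trace_mul_comm]; exact trPH
  have trHPH : Matrix.trace (H * (P * H)) = (q₀ : ℂ) := by
    rw [Matrix.trace_mul_comm, mul_assoc, hProj]
    exact trPH
  have rH : ∀ M : Matrix (Fin N) (Fin N) ℂ, H * (H * M) = H * M := fun M => by
    rw [← mul_assoc, hProj]
  have rP : ∀ M : Matrix (Fin N) (Fin N) ℂ, P * (P * M) = P * M := fun M => by
    rw [← mul_assoc, hPP]
  have rPHP : ∀ M : Matrix (Fin N) (Fin N) ℂ, P * (H * (P * M)) = (q₀ : ℂ) • (P * M) :=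
    fun M => by rw [← mul_assoc, ← mul_assoc, hPHP, Matrix.smul_mul]
  have rPHP' : P * (H * P) = (q₀ : ℂ) • P := by rw [← mul_assoc, hPHP]
  have hUU : U * Uᴴ = 1 := by
    have h := Matrix.mem_unitaryGroup_iff.mp hU
    rwa [Matrix.star_eq_conjTranspose] at h
  have traceWU : ∀ W : Matrix (Fin N) (Fin N) ℂ,
      Matrix.trace ((W * U)ᴴ * (W * U)) = Matrix.trace (Wᴴ * W) := by
    intro W
    rw [Matrix.conjTranspose_mul]
    calc Matrix.trace (Uᴴ * Wᴴ * (W * U)) = Matrix.trace (Uᴴ * (Wᴴ * (W * U))) := by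
            rw [mul_assoc]
      _ = Matrix.trace (Wᴴ * (W * U) * Uᴴ) := Matrix.trace_mul_comm _ _
      _ = Matrix.trace (Wᴴ * W * (U * Uᴴ)) := by rw [mul_assoc, mul_assoc, mul_assoc]
      _ = Matrix.trace (Wᴴ * W) := by rw [hUU, mul_one]
  -- Part 2 : the norm of η
  set S : Matrix (Fin N) (Fin N) ℂ := (x : ℂ) • X₀ + (y : ℂ) • Y₀ with hSdef
  have hXh : X₀ᴴ = -X₀ := by
    rw [hX₀, Matrix.conjTranspose_sub, Matrix.conjTranspose_mul, Matrix.conjTranspose_mul,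
      hPh, hHerm.eq]
    abel
  have hYh : Y₀ᴴ = -Y₀ := by
    rw [hY₀, Matrix.conjTranspose_smul, Matrix.conjTranspose_sub, Matrix.conjTranspose_mul,
      Matrix.conjTranspose_mul, hXh, hHerm.eq, Complex.star_def, Complex.conj_I]
    simp only [Matrix.mul_neg, Matrix.neg_mul, neg_smul, smul_sub, smul_neg,
      sub_neg_eq_add, neg_add, neg_neg]
    module
  have hSh : Sᴴ = -S := by
    rw [hSdef, Matrix.conjTranspose_add, Matrix.conjTranspose_smul, Matrix.conjTranspose_smul,
      hXh, hYh, Complex.star_def, Complex.conj_ofReal, Complex.conj_ofReal]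
    rw [smul_neg, smul_neg, neg_add]
  have trSS : Matrix.trace (Sᴴ * S) = ((2 * q₀ * (1 - q₀) * (x ^ 2 + y ^ 2) : ℝ) : ℂ) := by
    rw [hSh, Matrix.neg_mul, Matrix.trace_neg]
    rw [hSdef, hY₀, hX₀]
    simp only [smul_add, smul_sub, smul_smul, add_mul, mul_add, sub_mul, mul_sub,
      Matrix.smul_mul, Matrix.mul_smul, mul_one, one_mul, mul_assoc, rH, rP, rPHP, rPHP',
      hProj, hPP]
    simp only [Matrix.trace_add, Matrix.trace_sub, Matrix.trace_smul, Matrix.trace_neg,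
      trP, trPH, trHP, trHPH, smul_eq_mul]
    push_cast
    linear_combination (2 * (y : ℂ) ^ 2 * ((q₀ : ℂ) ^ 2 - (q₀ : ℂ))) * Complex.I_sq
  have hfrobη : frobNorm η = Real.sqrt (2 * q₀ * (1 - q₀) * (x ^ 2 + y ^ 2)) := by
    rw [hη]
    simp only [frobNorm]
    rw [traceWU S, trSS, Complex.ofReal_re]
  have hk : (0 : ℝ) ≤ 2 * q₀ * (1 - q₀) := by nlinarith
  have hfrobη' : frobNorm η = c₀ * Real.sqrt (x ^ 2 + y ^ 2) := by
    rw [hfrobη, hc₀, ← Real.sqrt_mul hk]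
  refine ⟨?_, hfrobη'⟩
  -- Part 1 : the retraction bound
  set R : ℝ := Real.sqrt (x ^ 2 + y ^ 2) with hRdef
  set θA : ℝ := Complex.arg ((x : ℂ) + (y : ℂ) * Complex.I) with hθAdef
  set G1 := expGate H (θA + Real.pi / 2) with hG1
  set G2 := expGate P (-R / 2) with hG2
  set G3 := expGate H (-Real.pi) with hG3
  set G4 := expGate P (R / 2) with hG4
  set G5 := expGate H (-(θA - Real.pi / 2)) with hG5
  have hretr : retr5 H P x y U = G1 * G2 * G3 * G4 * G5 * U := rfl
  have hVV : G5ᴴ * (G4ᴴ * (G3ᴴ * (G2ᴴ * (G1ᴴ * (G1 * (G2 * (G3 * (G4 * G5)))))))) = 1 := by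
    rw [hG1, hG2, hG3, hG4, hG5]
    simp only [expGate_star H hProj hHerm.eq, expGate_star P hPP hPh]
    rw [expGate_cancel H hProj, expGate_cancel P hPP, expGate_cancel H hProj,
      expGate_cancel P hPP, expGate_mul H hProj, neg_add_cancel, expGate_zero H hProj]
  have htr1 : Matrix.trace ((G1 * G2 * G3 * G4 * G5)ᴴ * (G1 * G2 * G3 * G4 * G5))
      = (N : ℂ) := by
    simp only [Matrix.conjTranspose_mul, mul_assoc]
    rw [hVV, Matrix.trace_one]
    simp
  have hE : ∀ t : ℝ, Complex.exp (Complex.I * (t : ℂ))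
      = ((Real.cos t : ℝ) : ℂ) + ((Real.sin t : ℝ) : ℂ) * Complex.I := by
    intro t
    rw [mul_comm, Complex.exp_mul_I, Complex.ofReal_cos, Complex.ofReal_sin]
  have pythC : Complex.cos ((R : ℂ) / 2) ^ 2 + Complex.sin ((R : ℂ) / 2) ^ 2 = 1 :=
    Complex.cos_sq_add_sin_sq _
  have eπ : Complex.exp (Complex.I * ((Real.pi : ℝ) : ℂ)) = -1 := by
    rw [mul_comm]; exact_mod_cast Complex.exp_pi_mul_I
  have eπ' : Complex.exp (Complex.I * ((-Real.pi : ℝ) : ℂ)) = -1 := by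
    push_cast
    rw [show Complex.I * -(Real.pi : ℂ) = -((Real.pi : ℂ) * Complex.I) by ring,
      Complex.exp_neg, Complex.exp_pi_mul_I]
    norm_num
  have htrV : Matrix.trace (G1 * G2 * G3 * G4 * G5)
      = ((N + (2 * Real.cos (R / 2) - 2)
          + (2 - 2 * Real.cos (R / 2)) * (1 - 2 * q₀) ^ 2 : ℝ) : ℂ) := by
    rw [Matrix.trace_mul_comm]
    simp only [← mul_assoc]
    rw [hG5, hG1, expGate_mul H hProj]
    have harg : -(θA - Real.pi / 2) + (θA + Real.pi / 2) = Real.pi := by ring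
    rw [harg, hG2, hG3, hG4]
    simp only [expGate_eq H hProj, expGate_eq P hPP]
    rw [eπ, eπ']
    simp only [smul_add, smul_sub, smul_smul, add_mul, mul_add, sub_mul, mul_sub,
      Matrix.smul_mul, Matrix.mul_smul, mul_one, one_mul, mul_assoc, rH, rP, rPHP, rPHP',
      hProj, hPP]
    simp only [Matrix.trace_add, Matrix.trace_sub, Matrix.trace_smul, Matrix.trace_one,
      trP, trPH, trHP, trHPH, smul_eq_mul, Fintype.card_fin]
    simp only [hE, neg_div, Real.cos_neg, Real.sin_neg]
    push_cast
    linear_combination ((1 : ℂ) - 2 * (q₀ : ℂ)) ^ 2 * pythC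
      - ((1 - 2 * (q₀ : ℂ)) ^ 2 * Complex.sin ((R : ℂ) / 2) ^ 2) * Complex.I_sq
  have hTrD : Matrix.trace ((G1 * G2 * G3 * G4 * G5 - 1)ᴴ * (G1 * G2 * G3 * G4 * G5 - 1))
      = (((4 - 4 * Real.cos (R / 2)) * (4 * q₀ - 4 * q₀ ^ 2) : ℝ) : ℂ) := by
    rw [Matrix.conjTranspose_sub, Matrix.conjTranspose_one, Matrix.sub_mul, Matrix.mul_sub,
      Matrix.mul_sub, one_mul, mul_one]
    rw [Matrix.trace_sub, Matrix.trace_sub, Matrix.trace_sub]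
    rw [htr1, Matrix.trace_conjTranspose, htrV, one_mul, Matrix.trace_one]
    rw [Complex.star_def, Complex.conj_ofReal]
    simp only [Fintype.card_fin]
    push_cast
    ring
  have hhalf : Real.sin (R / 4) ^ 2 = (1 - Real.cos (R / 2)) / 2 := by
    have h4 : R / 2 / 2 = R / 4 := by ring
    have habs := Real.abs_sin_half (R / 2)
    rw [h4] at habs
    have := congrArg (fun t : ℝ => t ^ 2) habs
    simp only [sq_abs] at this
    rw [this, Real.sq_sqrt]
    nlinarith [Real.cos_le_one (R / 2)]
  have hsinle := Real.sin_sq_le_sq (x := R / 4)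
  have hR2 : x ^ 2 + y ^ 2 = R ^ 2 := by
    rw [hRdef, Real.sq_sqrt (by positivity)]
  rw [hfrobη, hretr]
  have hD : G1 * G2 * G3 * G4 * G5 * U - U = (G1 * G2 * G3 * G4 * G5 - 1) * U := by
    rw [Matrix.sub_mul, one_mul]
  rw [hD]
  simp only [frobNorm]
  rw [traceWU, hTrD, Complex.ofReal_re]
  apply Real.sqrt_le_sqrt
  nlinarith [hq₀pos, hq₀lt, hhalf, hsinle, hR2,
    mul_le_mul_of_nonneg_left hsinle (by nlinarith : (0:ℝ) ≤ 32 * (q₀ - q₀ ^ 2))]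
end

section
/- Let H be an N×N complex Hermitian matrix with H² = H, let |ψ0⟩ ∈ ℂ^N be a unit vector, ψ0 = |ψ0⟩⟨ψ0|, and f(U) := Tr(H U ψ0 U†). Then for every unitary U, the Riemannian gradient grad f(U) = [H, U ψ0 U†] U satisfies ‖grad f(U)‖_F² = 2 f(U) (1 − f(U)). -/
open Matrix

/-- The cost value `f(U) = Tr(H U ψ0 U†)` (its real part; it is in fact real). -/
noncomputable def costVal {N : ℕ} (H P U : Matrix (Fin N) (Fin N) ℂ) : ℝ :=
  (Matrix.trace (H * (U * P * Uᴴ))).re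

/-- The Riemannian gradient `grad f(U) = [H, U ψ0 U†] U`. -/
noncomputable def rieGrad {N : ℕ} (H P U : Matrix (Fin N) (Fin N) ℂ) :
    Matrix (Fin N) (Fin N) ℂ :=
  (H * (U * P * Uᴴ) - (U * P * Uᴴ) * H) * U

lemma mul_vecMulVec {N : ℕ} (A : Matrix (Fin N) (Fin N) ℂ) (v w : Fin N → ℂ) :
    A * Matrix.vecMulVec v w = Matrix.vecMulVec (A *ᵥ v) w := by
  ext i j
  simp [Matrix.mul_apply, Matrix.vecMulVec_apply, Matrix.mulVec, dotProduct,
    Finset.sum_mul, mul_assoc]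

lemma vecMulVec_mul {N : ℕ} (v w : Fin N → ℂ) (B : Matrix (Fin N) (Fin N) ℂ) :
    Matrix.vecMulVec v w * B = Matrix.vecMulVec v (w ᵥ* B) := by
  ext i j
  simp [Matrix.mul_apply, Matrix.vecMulVec_apply, Matrix.vecMul, dotProduct,
    Finset.mul_sum, mul_assoc, mul_comm, mul_left_comm]

lemma vecMulVec_mul_vecMulVec {N : ℕ} (a b c d : Fin N → ℂ) :
    Matrix.vecMulVec a b * Matrix.vecMulVec c d
      = (b ⬝ᵥ c) • Matrix.vecMulVec a d := by
  ext i j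
  simp only [Matrix.mul_apply, Matrix.vecMulVec_apply, Matrix.smul_apply,
    dotProduct, smul_eq_mul, Finset.sum_mul]
  exact Finset.sum_congr rfl (fun k _ => by ring)

lemma trace_vecMulVec {N : ℕ} (a b : Fin N → ℂ) :
    Matrix.trace (Matrix.vecMulVec a b) = a ⬝ᵥ b := by
  simp [Matrix.trace, Matrix.diag, Matrix.vecMulVec_apply, dotProduct]

lemma trace_conjTranspose_mul_self_re_nonneg {N : ℕ} (X : Matrix (Fin N) (Fin N) ℂ) :
    0 ≤ (Matrix.trace (Xᴴ * X)).re := by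
  have : Matrix.trace (Xᴴ * X) = ∑ j, ∑ i, (starRingEnd ℂ) (X i j) * X i j := by
    simp [Matrix.trace, Matrix.diag, Matrix.mul_apply, Matrix.conjTranspose_apply]
  rw [this]
  simp only [Complex.conj_mul', ← Complex.ofReal_pow, ← Complex.ofReal_sum]
  rw [Complex.ofReal_re]
  positivity

theorem stmt_15 {N : ℕ} (H : Matrix (Fin N) (Fin N) ℂ)
    (hHerm : H.IsHermitian) (hProj : H * H = H)
    (ψ₀ : Fin N → ℂ) (hψ₀ : star ψ₀ ⬝ᵥ ψ₀ = 1) :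
    ∀ U ∈ Matrix.unitaryGroup (Fin N) ℂ,
      frobNorm (rieGrad H (rankOneProj ψ₀) U) ^ 2
        = 2 * costVal H (rankOneProj ψ₀) U * (1 - costVal H (rankOneProj ψ₀) U) := by
  intro U hU
  have hU1 : Uᴴ * U = 1 := by
    simpa [Matrix.star_eq_conjTranspose] using (Matrix.mem_unitaryGroup_iff'.mp hU)
  have hU2 : U * Uᴴ = 1 := by
    simpa [Matrix.star_eq_conjTranspose] using (Matrix.mem_unitaryGroup_iff.mp hU)
  set v : Fin N → ℂ := U *ᵥ ψ₀ with hv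
  -- the rotated state
  have hρ : U * rankOneProj ψ₀ * Uᴴ = Matrix.vecMulVec v (star v) := by
    rw [rankOneProj, mul_vecMulVec, vecMulVec_mul, ← Matrix.star_mulVec]
  -- normalization of v
  have hvnorm : star v ⬝ᵥ v = 1 := by
    rw [hv, Matrix.star_mulVec, Matrix.dotProduct_mulVec, Matrix.vecMul_vecMul, hU1,
      Matrix.vecMul_one, hψ₀]
  set a : Fin N → ℂ := H *ᵥ v with ha
  set c : ℂ := star v ⬝ᵥ a with hc
  -- conjugate of a
  have hstara : star a = star v ᵥ* H := by
    rw [ha, Matrix.star_mulVec, hHerm.eq]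
  -- c is "self adjoint"-flavored quantities
  have hba : star a ⬝ᵥ v = c := by
    rw [hstara, ← Matrix.dotProduct_mulVec, hc]
  have haa : star a ⬝ᵥ a = c := by
    rw [hstara, ha, ← Matrix.dotProduct_mulVec, Matrix.mulVec_mulVec, hProj, hc]
  -- Hρ and ρH as rank one matrices
  have hHρ : H * Matrix.vecMulVec v (star v) = Matrix.vecMulVec a (star v) := by
    rw [mul_vecMulVec, ha]
  have hρH : Matrix.vecMulVec v (star v) * H = Matrix.vecMulVec v (star a) := by
    rw [vecMulVec_mul, hstara]
  -- cost value equals real part of c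
  have hcost : costVal H (rankOneProj ψ₀) U = c.re := by
    rw [costVal, hρ, hHρ, trace_vecMulVec, dotProduct_comm]
  -- c is real
  have h1 : star c = star a ⬝ᵥ v := by
    simp [hc, dotProduct, mul_comm]
  have hcstar : star c = c := h1.trans hba
  have hcreal : (c.re : ℂ) = c := Complex.conj_eq_iff_re.mp hcstar
  -- compute the trace of Gᴴ G
  have key : Matrix.trace ((rieGrad H (rankOneProj ψ₀) U)ᴴ * rieGrad H (rankOneProj ψ₀) U)
      = 2 * c * (1 - c) := by
    set ρ : Matrix (Fin N) (Fin N) ℂ := Matrix.vecMulVec v (star v) with hρdef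
    have hG : rieGrad H (rankOneProj ψ₀) U = (H * ρ - ρ * H) * U := by
      rw [rieGrad, hρ]
    have hρherm : ρᴴ = ρ := by
      rw [hρdef]
      ext i j
      simp [Matrix.conjTranspose_apply, Matrix.vecMulVec_apply, mul_comm]
    have hAH : (H * ρ - ρ * H)ᴴ = ρ * H - H * ρ := by
      simp [Matrix.conjTranspose_sub, Matrix.conjTranspose_mul, hHerm.eq, hρherm]
    rw [hG, Matrix.conjTranspose_mul, hAH]
    have : (Uᴴ * (ρ * H - H * ρ)) * ((H * ρ - ρ * H) * U)
        = Uᴴ * ((ρ * H - H * ρ) * (H * ρ - ρ * H) * U) := by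
      noncomm_ring
    rw [this, Matrix.trace_mul_comm, Matrix.mul_assoc, hU2, Matrix.mul_one]
    have expand : (ρ * H - H * ρ) * (H * ρ - ρ * H)
        = ρ * H * (H * ρ) - ρ * H * (ρ * H) - H * ρ * (H * ρ) + H * ρ * (ρ * H) := by
      noncomm_ring
    rw [expand]
    have t1 : Matrix.trace (ρ * H * (H * ρ)) = c := by
      rw [hρdef, hρH, hHρ, vecMulVec_mul_vecMulVec, Matrix.trace_smul, trace_vecMulVec,
        haa, dotProduct_comm, hvnorm, smul_eq_mul, mul_one]
    have t2 : Matrix.trace (ρ * H * (ρ * H)) = c * c := by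
      rw [hρdef, hρH, vecMulVec_mul_vecMulVec, Matrix.trace_smul, trace_vecMulVec,
        hba, dotProduct_comm, hba, smul_eq_mul]
    have t3 : Matrix.trace (H * ρ * (H * ρ)) = c * c := by
      rw [hHρ, vecMulVec_mul_vecMulVec, Matrix.trace_smul, trace_vecMulVec, smul_eq_mul,
        dotProduct_comm a (star v), ← hc]
    have t4 : Matrix.trace (H * ρ * (ρ * H)) = c := by
      rw [hρdef, hHρ, hρH, vecMulVec_mul_vecMulVec, Matrix.trace_smul, trace_vecMulVec,
        hvnorm, dotProduct_comm, haa, smul_eq_mul, one_mul]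
    simp only [Matrix.trace_add, Matrix.trace_sub, t1, t2, t3, t4]
    ring
  -- conclude
  rw [frobNorm, Real.sq_sqrt (trace_conjTranspose_mul_self_re_nonneg _), key, hcost]
  obtain ⟨r, hr⟩ : ∃ r : ℝ, c = (r : ℂ) := ⟨c.re, hcreal.symm⟩
  rw [hr]
  have h2 : (2 : ℂ) * r * (1 - r) = ((2 * r * (1 - r) : ℝ) : ℂ) := by push_cast; ring
  rw [h2, Complex.ofReal_re]
  simp
end
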